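/- For natural numbers n, r, k with 1 ≤ k ≤ r and n > 2r+1, the binomial coefficient C(k+n-r, r+1) is strictly greater than C(k+n-r, k). -/
import Mathlib

lemma choose_strict_step (m i : ℕ) (h : 2 * i + 1 < m) :
    Nat.choose m i < Nat.choose m (i + 1) := by
  have hi : i ≤ m := by omega
  have hpos : 0 < Nat.choose m i := Nat.choose_pos hi
  have key := Nat.choose_succ_right_eq m i
  have : Nat.choose m i * (i + 1) < Nat.choose m (i + 1) * (i + 1) := by
    rw [key]
    have : i + 1 < m - i := by omega
    exact Nat.mul_lt_mul_of_le_of_lt (le_refl _) this hpos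
  exact Nat.lt_of_mul_lt_mul_right this

lemma choose_strict_mono (m k j : ℕ) (hkj : k < j) (hj : 2 * j ≤ m) :
    Nat.choose m k < Nat.choose m j := by
  induction j with
  | zero => omega
  | succ j ih =>
    rcases Nat.lt_or_ge k j with h | h
    · exact lt_trans (ih h (by omega)) (choose_strict_step m j (by omega))
    · have : k = j := by omega
      subst this
      exact choose_strict_step m k (by omega)

theorem choose_lt (n r k : ℕ) (hk1 : 1 ≤ k) (hkr : k ≤ r) (hn : 2 * r + 1 < n) :
    Nat.choose (k + n - r) k < Nat.choose (k + n - r) (r + 1) := by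
  set m := k + n - r with hm
  have hmval : m = k + n - r := rfl
  rcases Nat.lt_or_ge m (2 * (r + 1)) with hcase | hcase
  · -- use symmetry: choose m (r+1) = choose m (m - (r+1))
    have hr1m : r + 1 ≤ m := by omega
    have hsymm : Nat.choose m (m - (r + 1)) = Nat.choose m (r + 1) :=
      Nat.choose_symm hr1m
    rw [← hsymm]
    apply choose_strict_mono
    · omega
    · omega
  · exact choose_strict_mono m k (r + 1) (by omega) hcase
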